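/- Let R ∈ ℝ^{m×n} have every entry of absolute value at most C, and let K := C/(1−β). Then the map π ↦ V(π,R) from the metric space (Π_MR, μ) to (ℝ^m, ‖·‖_∞) is Lipschitz continuous with Lipschitz constant Kδ/(δ − β); that is, ‖V(π₁,R) − V(π₂,R)‖_∞ ≤ [Kδ/(δ − β)] · μ(π₁,π₂) for all policies π₁, π₂. -/

import Mathlib

open Finset Filter Matrix

/-- A row-stochastic matrix (decision rule): nonnegative entries, each row sums to 1. -/
def IsStoch (m n : ℕ) (d : Matrix (Fin m) (Fin n) ℝ) : Prop :=
  (∀ s a, 0 ≤ d s a) ∧ ∀ s, ∑ a, d s a = 1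

/-- Valid transition probabilities `p s a s' = p(s'|s,a)`. -/
def IsTransKer (m n : ℕ) (p : Fin m → Fin n → Fin m → ℝ) : Prop :=
  (∀ s a s', 0 ≤ p s a s') ∧ ∀ s a, ∑ s', p s a s' = 1

/-- Max absolute entry norm on vectors. -/
noncomputable def vecNorm {m : ℕ} (v : Fin m → ℝ) : ℝ := ⨆ i, |v i|

/-- Maximum absolute row-sum norm on matrices. -/
noncomputable def rowSumNorm {m n : ℕ} (B : Matrix (Fin m) (Fin n) ℝ) : ℝ :=
  ⨆ i, ∑ j, |B i j|

/-- Max absolute entry norm on matrices. -/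
noncomputable def maxNorm {m n : ℕ} (B : Matrix (Fin m) (Fin n) ℝ) : ℝ :=
  ⨆ i, ⨆ j, |B i j|

/-- `(R_d)_s = ∑_a R(s,a) d(a|s)`. -/
noncomputable def Rvec {m n : ℕ} (R d : Matrix (Fin m) (Fin n) ℝ) : Fin m → ℝ :=
  fun s => ∑ a, R s a * d s a

/-- `(P_d)_{s,s'} = ∑_a p(s'|s,a) d(a|s)`. -/
noncomputable def Pmat {m n : ℕ} (p : Fin m → Fin n → Fin m → ℝ)
    (d : Matrix (Fin m) (Fin n) ℝ) : Matrix (Fin m) (Fin m) ℝ :=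
  fun s s' => ∑ a, p s a s' * d s a

/-- `P_0^π = I`, `P_{t+1}^π = P_t^π ⬝ P_{d_t}`. -/
noncomputable def Ppi {m n : ℕ} (p : Fin m → Fin n → Fin m → ℝ)
    (π : ℕ → Matrix (Fin m) (Fin n) ℝ) : ℕ → Matrix (Fin m) (Fin m) ℝ
  | 0 => 1
  | t + 1 => Ppi p π t * Pmat p (π t)

/-- Finite-horizon standard discounted cost vector `V_T(π,R)`. -/
noncomputable def VT {m n : ℕ} (β : ℝ) (p : Fin m → Fin n → Fin m → ℝ)
    (π : ℕ → Matrix (Fin m) (Fin n) ℝ) (R : Matrix (Fin m) (Fin n) ℝ) (T : ℕ) :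
    Fin m → ℝ :=
  fun x => ∑ t ∈ Finset.range T, β ^ t * (Ppi p π t *ᵥ Rvec R (π t)) x

/-- Infinite-horizon standard discounted cost vector `V(π,R)`. -/
noncomputable def Vinf {m n : ℕ} (β : ℝ) (p : Fin m → Fin n → Fin m → ℝ)
    (π : ℕ → Matrix (Fin m) (Fin n) ℝ) (R : Matrix (Fin m) (Fin n) ℝ) :
    Fin m → ℝ :=
  fun x => ∑' t : ℕ, β ^ t * (Ppi p π t *ᵥ Rvec R (π t)) x

/-- `Qrev β γ p π R T k = Q_{T-1-k}^{T,π,R}`, defined by the backward recursion. -/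
noncomputable def Qrev {m n : ℕ} (β γ : ℝ) (p : Fin m → Fin n → Fin m → ℝ)
    (π : ℕ → Matrix (Fin m) (Fin n) ℝ) (R : Matrix (Fin m) (Fin n) ℝ) (T : ℕ) :
    ℕ → Matrix (Fin m) (Fin n) ℝ
  | 0 => fun s a => Real.exp (γ * β ^ (T - 1) * R s a)
  | k + 1 => fun s a =>
      Real.exp (γ * β ^ (T - 1 - (k + 1)) * R s a) *
        ∑ s', p s a s' * ∑ a', π (T - 1 - k) s' a' * Qrev β γ p π R T k s' a'

/-- `Q_t^{T,π,R}` for `0 ≤ t ≤ T-1`. -/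
noncomputable def Qmat {m n : ℕ} (β γ : ℝ) (p : Fin m → Fin n → Fin m → ℝ)
    (π : ℕ → Matrix (Fin m) (Fin n) ℝ) (R : Matrix (Fin m) (Fin n) ℝ) (T t : ℕ) :
    Matrix (Fin m) (Fin n) ℝ :=
  Qrev β γ p π R T (T - 1 - t)

/-- Finite-horizon risk-sensitive cost vector `J_T(π,γ,R)`. -/
noncomputable def JT {m n : ℕ} (β γ : ℝ) (p : Fin m → Fin n → Fin m → ℝ)
    (π : ℕ → Matrix (Fin m) (Fin n) ℝ) (R : Matrix (Fin m) (Fin n) ℝ) (T : ℕ) :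
    Fin m → ℝ :=
  fun s => ∑ a, π 0 s a * Qmat β γ p π R T 0 s a

/-- Infinite-horizon risk-sensitive cost `J(π,γ,R)(x) = lim_{T→∞} J_T(π,γ,R)(x)`. -/
noncomputable def Jinf {m n : ℕ} (β γ : ℝ) (p : Fin m → Fin n → Fin m → ℝ)
    (π : ℕ → Matrix (Fin m) (Fin n) ℝ) (R : Matrix (Fin m) (Fin n) ℝ) (x : Fin m) : ℝ :=
  limUnder atTop (fun T => JT β γ p π R T x)

/-- The metric `μ(π₁,π₂) = sup_t δ^t ‖d_t − f_t‖_∞` on Markovian randomized policies. -/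
noncomputable def policyDist {m n : ℕ} (δ : ℝ)
    (π₁ π₂ : ℕ → Matrix (Fin m) (Fin n) ℝ) : ℝ :=
  ⨆ t : ℕ, δ ^ t * rowSumNorm (π₁ t - π₂ t)

lemma sum_abs_le_rowSumNorm {m n : ℕ} (B : Matrix (Fin m) (Fin n) ℝ) (s : Fin m) :
    ∑ a, |B s a| ≤ rowSumNorm B :=
  le_ciSup (f := fun i => ∑ j, |B i j|) (Set.Finite.bddAbove (Set.finite_range _)) s

lemma isStoch_Pmat {m n : ℕ} {p : Fin m → Fin n → Fin m → ℝ} (hp : IsTransKer m n p)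
    {d : Matrix (Fin m) (Fin n) ℝ} (hd : IsStoch m n d) : IsStoch m m (Pmat p d) := by
  constructor
  · intro s s'
    exact Finset.sum_nonneg fun a _ => mul_nonneg (hp.1 s a s') (hd.1 s a)
  · intro s
    rw [show ∑ s', Pmat p d s s' = ∑ a, (∑ s', p s a s') * d s a by
      simp [Pmat, Finset.sum_mul]; rw [Finset.sum_comm]]
    simp only [hp.2, one_mul, hd.2]

lemma isStoch_mul {m : ℕ} {A B : Matrix (Fin m) (Fin m) ℝ}
    (hA : IsStoch m m A) (hB : IsStoch m m B) : IsStoch m m (A * B) := by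
  constructor
  · intro s s'
    rw [Matrix.mul_apply]
    exact Finset.sum_nonneg fun k _ => mul_nonneg (hA.1 s k) (hB.1 k s')
  · intro s
    simp only [Matrix.mul_apply]
    rw [Finset.sum_comm]
    simp only [← Finset.mul_sum, hB.2, mul_one, hA.2]

lemma isStoch_Ppi {m n : ℕ} {p : Fin m → Fin n → Fin m → ℝ} (hp : IsTransKer m n p)
    {π : ℕ → Matrix (Fin m) (Fin n) ℝ} (hπ : ∀ t, IsStoch m n (π t)) (t : ℕ) :
    IsStoch m m (Ppi p π t) := by
  induction t with
  | zero =>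
    constructor
    · intro s s'
      simp [Ppi, Matrix.one_apply]
      split <;> norm_num
    · intro s
      simp [Ppi, Matrix.one_apply]
  | succ t ih => exact isStoch_mul ih (isStoch_Pmat hp (hπ t))

lemma abs_Rvec_le {m n : ℕ} {C : ℝ} {R : Matrix (Fin m) (Fin n) ℝ} (hR : ∀ s a, |R s a| ≤ C)
    {d : Matrix (Fin m) (Fin n) ℝ} (hd : IsStoch m n d) (s : Fin m) : |Rvec R d s| ≤ C := by
  calc |Rvec R d s| ≤ ∑ a, |R s a * d s a| := Finset.abs_sum_le_sum_abs _ _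
    _ ≤ ∑ a, C * d s a := by
        apply Finset.sum_le_sum
        intro a _
        rw [abs_mul, abs_of_nonneg (hd.1 s a)]
        exact mul_le_mul_of_nonneg_right (hR s a) (hd.1 s a)
    _ = C := by rw [← Finset.mul_sum, hd.2, mul_one]

lemma abs_Rvec_sub_le {m n : ℕ} {C : ℝ} {R : Matrix (Fin m) (Fin n) ℝ} (hR : ∀ s a, |R s a| ≤ C)
    (hC : 0 < C) (d f : Matrix (Fin m) (Fin n) ℝ) (s : Fin m) :
    |Rvec R d s - Rvec R f s| ≤ C * rowSumNorm (d - f) := by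
  have : Rvec R d s - Rvec R f s = ∑ a, R s a * (d s a - f s a) := by
    simp [Rvec, mul_sub, Finset.sum_sub_distrib]
  rw [this]
  calc |∑ a, R s a * (d s a - f s a)| ≤ ∑ a, |R s a * (d s a - f s a)| :=
        Finset.abs_sum_le_sum_abs _ _
    _ ≤ ∑ a, C * |d s a - f s a| := by
        apply Finset.sum_le_sum
        intro a _
        rw [abs_mul]
        exact mul_le_mul_of_nonneg_right (hR s a) (abs_nonneg _)
    _ = C * ∑ a, |(d - f) s a| := by rw [Finset.mul_sum]; simp [Matrix.sub_apply]
    _ ≤ C * rowSumNorm (d - f) :=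
        mul_le_mul_of_nonneg_left (sum_abs_le_rowSumNorm _ s) hC.le

lemma Pmat_rowdiff_le {m n : ℕ} {p : Fin m → Fin n → Fin m → ℝ} (hp : IsTransKer m n p)
    (d f : Matrix (Fin m) (Fin n) ℝ) (s : Fin m) :
    ∑ s', |Pmat p d s s' - Pmat p f s s'| ≤ rowSumNorm (d - f) := by
  calc ∑ s', |Pmat p d s s' - Pmat p f s s'|
      = ∑ s', |∑ a, p s a s' * (d s a - f s a)| := by
        simp [Pmat, mul_sub, Finset.sum_sub_distrib]
    _ ≤ ∑ s', ∑ a, p s a s' * |d s a - f s a| := by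
        apply Finset.sum_le_sum
        intro s' _
        refine le_trans (Finset.abs_sum_le_sum_abs _ _) ?_
        apply Finset.sum_le_sum
        intro a _
        rw [abs_mul, abs_of_nonneg (hp.1 s a s')]
    _ = ∑ a, (∑ s', p s a s') * |d s a - f s a| := by
        rw [Finset.sum_comm]; simp [Finset.sum_mul]
    _ = ∑ a, |(d - f) s a| := by simp [hp.2, Matrix.sub_apply]
    _ ≤ rowSumNorm (d - f) := sum_abs_le_rowSumNorm _ s

/-- the map `π ↦ V(π,R)` is Lipschitz with constant `Kδ/(δ − β)` with respect
to the metric `μ`. -/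
theorem stmt_6 (m n : ℕ) (hm : 1 ≤ m) (hn : 1 ≤ n)
    (p : Fin m → Fin n → Fin m → ℝ) (hp : IsTransKer m n p)
    (β : ℝ) (hβ0 : 0 < β) (hβ1 : β < 1)
    (C : ℝ) (hC : 0 < C)
    (δ : ℝ) (hδ : β < δ) (hδ1 : δ < 1)
    (R : Matrix (Fin m) (Fin n) ℝ) (hR : ∀ s a, |R s a| ≤ C)
    (π₁ π₂ : ℕ → Matrix (Fin m) (Fin n) ℝ)
    (h₁ : ∀ t, IsStoch m n (π₁ t)) (h₂ : ∀ t, IsStoch m n (π₂ t)) :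
    vecNorm (Vinf β p π₁ R - Vinf β p π₂ R) ≤
      C / (1 - β) * δ / (δ - β) * policyDist δ π₁ π₂ := by
  have hm' : Nonempty (Fin m) := ⟨⟨0, hm⟩⟩
  have hδ0 : 0 < δ := lt_trans hβ0 hδ
  set μ := policyDist δ π₁ π₂ with hμdef
  set g : ℕ → ℝ := fun k => rowSumNorm (π₁ k - π₂ k) with hgdef
  have hg0 : ∀ k, 0 ≤ g k := fun k =>
    le_trans (Finset.sum_nonneg fun a _ => abs_nonneg _) (sum_abs_le_rowSumNorm _ ⟨0, hm⟩)
  have hg2 : ∀ k, g k ≤ 2 := by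
    intro k
    apply ciSup_le
    intro s
    calc ∑ a, |(π₁ k - π₂ k) s a| ≤ ∑ a, (π₁ k s a + π₂ k s a) := by
          apply Finset.sum_le_sum; intro a _
          rw [Matrix.sub_apply]
          refine le_trans (abs_sub _ _) ?_
          rw [abs_of_nonneg ((h₁ k).1 s a), abs_of_nonneg ((h₂ k).1 s a)]
      _ = 2 := by rw [Finset.sum_add_distrib, (h₁ k).2, (h₂ k).2]; norm_num
  have hbdd : BddAbove (Set.range fun t => δ ^ t * g t) := by
    refine ⟨2, ?_⟩
    rintro x ⟨t, rfl⟩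
    calc δ ^ t * g t ≤ 1 * 2 :=
          mul_le_mul (pow_le_one₀ hδ0.le hδ1.le) (hg2 t) (hg0 t) one_pos.le
      _ = 2 := one_mul 2
  have hμk : ∀ k, g k ≤ μ * δ⁻¹ ^ k := by
    intro k
    rw [inv_pow, ← div_eq_mul_inv, le_div_iff₀ (pow_pos hδ0 k)]
    calc g k * δ ^ k = δ ^ k * g k := mul_comm _ _
      _ ≤ μ := le_ciSup hbdd k
  have hμ0 : 0 ≤ μ := le_trans (by simpa using hg0 0) (le_ciSup hbdd 0)
  -- row-sum difference of products
  have hE : ∀ t x, ∑ s', |Ppi p π₁ t x s' - Ppi p π₂ t x s'| ≤ ∑ k ∈ Finset.range t, g k := by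
    intro t
    induction t with
    | zero => intro x; simp [Ppi]
    | succ t ih =>
      intro x
      have hA₁ := isStoch_Ppi hp h₁ t
      have hB₁ := isStoch_Pmat hp (h₁ t)
      have hB₂ := isStoch_Pmat hp (h₂ t)
      have key : ∀ s', Ppi p π₁ (t+1) x s' - Ppi p π₂ (t+1) x s'
          = ∑ k, (Ppi p π₁ t x k * (Pmat p (π₁ t) k s' - Pmat p (π₂ t) k s')
               + (Ppi p π₁ t x k - Ppi p π₂ t x k) * Pmat p (π₂ t) k s') := by
        intro s'
        rw [show Ppi p π₁ (t+1) = Ppi p π₁ t * Pmat p (π₁ t) from rfl,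
            show Ppi p π₂ (t+1) = Ppi p π₂ t * Pmat p (π₂ t) from rfl,
            Matrix.mul_apply, Matrix.mul_apply, ← Finset.sum_sub_distrib]
        exact Finset.sum_congr rfl fun k _ => by ring
      calc ∑ s', |Ppi p π₁ (t+1) x s' - Ppi p π₂ (t+1) x s'|
          ≤ ∑ s', ∑ k, (Ppi p π₁ t x k * |Pmat p (π₁ t) k s' - Pmat p (π₂ t) k s'|
               + |Ppi p π₁ t x k - Ppi p π₂ t x k| * Pmat p (π₂ t) k s') := by
            apply Finset.sum_le_sum; intro s' _
            rw [key s']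
            refine le_trans (Finset.abs_sum_le_sum_abs _ _) (Finset.sum_le_sum fun k _ => ?_)
            refine le_trans (abs_add_le _ _) ?_
            rw [abs_mul, abs_mul, abs_of_nonneg (hA₁.1 x k), abs_of_nonneg (hB₂.1 k s')]
        _ = ∑ k, (Ppi p π₁ t x k * (∑ s', |Pmat p (π₁ t) k s' - Pmat p (π₂ t) k s'|)
               + |Ppi p π₁ t x k - Ppi p π₂ t x k| * (∑ s', Pmat p (π₂ t) k s')) := by
            rw [Finset.sum_comm]
            simp [Finset.mul_sum, Finset.sum_add_distrib]
        _ ≤ ∑ k, (Ppi p π₁ t x k * g t + |Ppi p π₁ t x k - Ppi p π₂ t x k| * 1) := by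
            apply Finset.sum_le_sum; intro k _
            refine add_le_add ?_ ?_
            · exact mul_le_mul_of_nonneg_left (Pmat_rowdiff_le hp _ _ k) (hA₁.1 x k)
            · rw [hB₂.2 k]
        _ = (∑ k, Ppi p π₁ t x k) * g t + ∑ k, |Ppi p π₁ t x k - Ppi p π₂ t x k| := by
            rw [Finset.sum_add_distrib, ← Finset.sum_mul]
            simp
        _ ≤ 1 * g t + ∑ k ∈ Finset.range t, g k := by
            rw [hA₁.2 x]
            exact add_le_add (le_refl _) (ih x)
        _ = ∑ k ∈ Finset.range (t+1), g k := by rw [Finset.sum_range_succ]; ring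
  -- per-term bound
  have hterm : ∀ t x,
      |β ^ t * (Ppi p π₁ t *ᵥ Rvec R (π₁ t)) x - β ^ t * (Ppi p π₂ t *ᵥ Rvec R (π₂ t)) x|
        ≤ C * μ * (β ^ t * ∑ k ∈ Finset.range (t+1), δ⁻¹ ^ k) := by
    intro t x
    have hA₁ := isStoch_Ppi hp h₁ t
    have key : (Ppi p π₁ t *ᵥ Rvec R (π₁ t)) x - (Ppi p π₂ t *ᵥ Rvec R (π₂ t)) x
        = ∑ s', (Ppi p π₁ t x s' * (Rvec R (π₁ t) s' - Rvec R (π₂ t) s')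
             + (Ppi p π₁ t x s' - Ppi p π₂ t x s') * Rvec R (π₂ t) s') := by
      rw [Matrix.mulVec, Matrix.mulVec, dotProduct, dotProduct, ← Finset.sum_sub_distrib]
      exact Finset.sum_congr rfl fun s' _ => by ring
    have hmain : |(Ppi p π₁ t *ᵥ Rvec R (π₁ t)) x - (Ppi p π₂ t *ᵥ Rvec R (π₂ t)) x|
        ≤ C * ∑ k ∈ Finset.range (t+1), g k := by
      rw [key]
      calc |∑ s', (Ppi p π₁ t x s' * (Rvec R (π₁ t) s' - Rvec R (π₂ t) s')
             + (Ppi p π₁ t x s' - Ppi p π₂ t x s') * Rvec R (π₂ t) s')|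
          ≤ ∑ s', (Ppi p π₁ t x s' * (C * g t)
               + |Ppi p π₁ t x s' - Ppi p π₂ t x s'| * C) := by
            refine le_trans (Finset.abs_sum_le_sum_abs _ _) (Finset.sum_le_sum fun s' _ => ?_)
            refine le_trans (abs_add_le _ _) (add_le_add ?_ ?_)
            · rw [abs_mul, abs_of_nonneg (hA₁.1 x s')]
              exact mul_le_mul_of_nonneg_left (abs_Rvec_sub_le hR hC _ _ s') (hA₁.1 x s')
            · rw [abs_mul]
              exact mul_le_mul_of_nonneg_left (abs_Rvec_le hR (h₂ t) s') (abs_nonneg _)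
        _ = (∑ s', Ppi p π₁ t x s') * (C * g t)
              + (∑ s', |Ppi p π₁ t x s' - Ppi p π₂ t x s'|) * C := by
            rw [Finset.sum_add_distrib, ← Finset.sum_mul, ← Finset.sum_mul]
        _ ≤ 1 * (C * g t) + (∑ k ∈ Finset.range t, g k) * C := by
            rw [hA₁.2 x]
            exact add_le_add (le_refl _) (mul_le_mul_of_nonneg_right (hE t x) hC.le)
        _ = C * ∑ k ∈ Finset.range (t+1), g k := by rw [Finset.sum_range_succ]; ring
    have h2 : C * ∑ k ∈ Finset.range (t+1), g k
        ≤ C * (μ * ∑ k ∈ Finset.range (t+1), δ⁻¹ ^ k) := by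
      refine mul_le_mul_of_nonneg_left ?_ hC.le
      rw [Finset.mul_sum]
      exact Finset.sum_le_sum fun k _ => hμk k
    calc |β ^ t * (Ppi p π₁ t *ᵥ Rvec R (π₁ t)) x - β ^ t * (Ppi p π₂ t *ᵥ Rvec R (π₂ t)) x|
        = β ^ t * |(Ppi p π₁ t *ᵥ Rvec R (π₁ t)) x - (Ppi p π₂ t *ᵥ Rvec R (π₂ t)) x| := by
          rw [← mul_sub, abs_mul, abs_of_nonneg (pow_nonneg hβ0.le t)]
      _ ≤ β ^ t * (C * (μ * ∑ k ∈ Finset.range (t+1), δ⁻¹ ^ k)) :=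
          mul_le_mul_of_nonneg_left (le_trans hmain h2) (pow_nonneg hβ0.le t)
      _ = C * μ * (β ^ t * ∑ k ∈ Finset.range (t+1), δ⁻¹ ^ k) := by ring
  -- summability of each series
  have habs : ∀ (π : ℕ → Matrix (Fin m) (Fin n) ℝ), (∀ t, IsStoch m n (π t)) → ∀ t x,
      |β ^ t * (Ppi p π t *ᵥ Rvec R (π t)) x| ≤ C * β ^ t := by
    intro π hπ t x
    have hA := isStoch_Ppi hp hπ t
    rw [abs_mul, abs_of_nonneg (pow_nonneg hβ0.le t)]
    rw [mul_comm (C) (β ^ t)]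
    refine mul_le_mul_of_nonneg_left ?_ (pow_nonneg hβ0.le t)
    rw [Matrix.mulVec, dotProduct]
    calc |∑ s', Ppi p π t x s' * Rvec R (π t) s'|
        ≤ ∑ s', Ppi p π t x s' * C := by
          refine le_trans (Finset.abs_sum_le_sum_abs _ _) (Finset.sum_le_sum fun s' _ => ?_)
          rw [abs_mul, abs_of_nonneg (hA.1 x s')]
          exact mul_le_mul_of_nonneg_left (abs_Rvec_le hR (hπ t) s') (hA.1 x s')
      _ = C := by rw [← Finset.sum_mul, hA.2 x, one_mul]
  have hsummable : ∀ (π : ℕ → Matrix (Fin m) (Fin n) ℝ), (∀ t, IsStoch m n (π t)) → ∀ x,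
      Summable (fun t => β ^ t * (Ppi p π t *ᵥ Rvec R (π t)) x) := by
    intro π hπ x
    refine Summable.of_norm_bounded ((summable_geometric_of_lt_one hβ0.le hβ1).mul_left C) ?_
    intro t
    rw [Real.norm_eq_abs]
    exact habs π hπ t x
  -- the geometric identity
  have hδne : δ ≠ 0 := hδ0.ne'
  have h1δ : (1:ℝ) - δ ≠ 0 := sub_ne_zero.mpr hδ1.ne'
  have hinv1 : δ⁻¹ ≠ 1 := by
    intro h
    exact hδ1.ne (by rw [← inv_inv δ, h, inv_one])
  have hid : ∀ t, β ^ t * ∑ k ∈ Finset.range (t+1), δ⁻¹ ^ k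
      = (1/(1-δ)) * (β/δ) ^ t - (δ/(1-δ)) * β ^ t := by
    intro t
    rw [geom_sum_eq hinv1, div_pow]
    field_simp
    have h' : (1/δ) ^ (t+1) * (δ ^ t * δ) = 1 := by
      rw [← pow_succ, ← mul_pow, one_div, inv_mul_cancel₀ hδne, one_pow]
    linear_combination h'
  have hr0 : (0:ℝ) ≤ β / δ := div_nonneg hβ0.le hδ0.le
  have hr1 : β / δ < 1 := (div_lt_one hδ0).mpr hδ
  have hbndsummable : Summable (fun t => C * μ * (β ^ t * ∑ k ∈ Finset.range (t+1), δ⁻¹ ^ k)) := by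
    have : Summable (fun t : ℕ => C * μ * ((1/(1-δ)) * (β/δ) ^ t - (δ/(1-δ)) * β ^ t)) := by
      refine Summable.mul_left _ (Summable.sub ?_ ?_)
      · exact (summable_geometric_of_lt_one hr0 hr1).mul_left _
      · exact (summable_geometric_of_lt_one hβ0.le hβ1).mul_left _
    refine this.congr fun t => by rw [hid t]
  have hbndtsum : (∑' t : ℕ, C * μ * (β ^ t * ∑ k ∈ Finset.range (t+1), δ⁻¹ ^ k))
      = C / (1 - β) * δ / (δ - β) * μ := by
    have e1 : (∑' t : ℕ, C * μ * (β ^ t * ∑ k ∈ Finset.range (t+1), δ⁻¹ ^ k))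
        = ∑' t : ℕ, C * μ * ((1/(1-δ)) * (β/δ) ^ t - (δ/(1-δ)) * β ^ t) :=
      tsum_congr fun t => by rw [hid t]
    rw [e1, tsum_mul_left, Summable.tsum_sub ((summable_geometric_of_lt_one hr0 hr1).mul_left _)
      ((summable_geometric_of_lt_one hβ0.le hβ1).mul_left _), tsum_mul_left, tsum_mul_left,
      tsum_geometric_of_lt_one hr0 hr1, tsum_geometric_of_lt_one hβ0.le hβ1]
    have hδβ : δ - β ≠ 0 := sub_ne_zero.mpr hδ.ne'
    have h1β : (1:ℝ) - β ≠ 0 := sub_ne_zero.mpr hβ1.ne'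
    have h1r : (1:ℝ) - β / δ ≠ 0 := sub_ne_zero.mpr hr1.ne'
    field_simp
    ring
  -- put it together
  refine ciSup_le fun x => ?_
  have hdiff : (Vinf β p π₁ R - Vinf β p π₂ R) x
      = ∑' t : ℕ, (β ^ t * (Ppi p π₁ t *ᵥ Rvec R (π₁ t)) x
          - β ^ t * (Ppi p π₂ t *ᵥ Rvec R (π₂ t)) x) := by
    rw [Pi.sub_apply]
    exact (Summable.tsum_sub (hsummable π₁ h₁ x) (hsummable π₂ h₂ x)).symm
  rw [hdiff]
  have hdsum : Summable (fun t => β ^ t * (Ppi p π₁ t *ᵥ Rvec R (π₁ t)) x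
      - β ^ t * (Ppi p π₂ t *ᵥ Rvec R (π₂ t)) x) :=
    (hsummable π₁ h₁ x).sub (hsummable π₂ h₂ x)
  calc |∑' t : ℕ, (β ^ t * (Ppi p π₁ t *ᵥ Rvec R (π₁ t)) x
          - β ^ t * (Ppi p π₂ t *ᵥ Rvec R (π₂ t)) x)|
      ≤ ∑' t : ℕ, C * μ * (β ^ t * ∑ k ∈ Finset.range (t+1), δ⁻¹ ^ k) := by
        refine le_trans ?_ (Summable.tsum_le_tsum (fun t => hterm t x) ?_ hbndsummable)
        · have := norm_tsum_le_tsum_norm (f := fun t => β ^ t * (Ppi p π₁ t *ᵥ Rvec R (π₁ t)) x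
              - β ^ t * (Ppi p π₂ t *ᵥ Rvec R (π₂ t)) x) ?_
          · simpa [Real.norm_eq_abs] using this
          · refine Summable.of_nonneg_of_le (fun t => norm_nonneg _) (fun t => ?_) hbndsummable
            rw [Real.norm_eq_abs]
            exact hterm t x
        · refine Summable.of_nonneg_of_le (fun t => abs_nonneg _) (fun t => hterm t x) hbndsummable
      _ = C / (1 - β) * δ / (δ - β) * μ := hbndtsum
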